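/- For every positive integer n and every complex number z, Σ_{λ⊢n} Π_{h∈H(λ)^⋄} (h+z)/h = Σ_{λ⊢n} Π_{j=1}^{n} C(k_j(λ)+z, k_j(λ)) = Σ_{λ⊢n} (−1)^{ℓ(λ)} Π_{j=1}^{n} C(−z−1, k_j(λ)), where k_j(λ) is the number of parts of λ equal to j, ℓ(λ) is the number of parts of λ, and C(w,k) := w(w−1)⋯(w−k+1)/k! is the generalized binomial coefficient for w ∈ ℂ and k ∈ ℕ. -/

import Mathlib

open Finset Polynomial

/-- Length of column `j` (0-indexed) of the Young diagram of `μ`,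
i.e. the number of parts of `μ` that are at least `j+1`. -/
def colLen {n : ℕ} (μ : Nat.Partition n) (j : ℕ) : ℕ :=
  (μ.parts.filter (fun p => j + 1 ≤ p)).card

/-- Length of row `i` (0-indexed) of the Young diagram of `μ`; this is the
`(i+1)`-st largest part of `μ` (or `0` if there is no such part). -/
def rowLen {n : ℕ} (μ : Nat.Partition n) (i : ℕ) : ℕ :=
  ((Finset.range n).filter (fun j => i < colLen μ j)).card

/-- The cells (0-indexed, `(row, column)`) of the Young diagram of `μ`. -/
def cells {n : ℕ} (μ : Nat.Partition n) : Finset (ℕ × ℕ) :=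
  (Finset.range n ×ˢ Finset.range n).filter (fun c => c.1 < colLen μ c.2)

/-- The arm length of a cell: the number of cells strictly to its right in its row. -/
def armLen {n : ℕ} (μ : Nat.Partition n) (c : ℕ × ℕ) : ℕ := rowLen μ c.1 - (c.2 + 1)

/-- The leg length of a cell: the number of cells strictly below it in its column. -/
def legLen {n : ℕ} (μ : Nat.Partition n) (c : ℕ × ℕ) : ℕ := colLen μ c.2 - (c.1 + 1)

/-- The hook length of a cell: `arm + leg + 1`. -/
def hookLen {n : ℕ} (μ : Nat.Partition n) (c : ℕ × ℕ) : ℕ := armLen μ c + legLen μ c + 1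

/-- `H(μ)`: the multiset of all hook lengths of `μ`. -/
def hooks {n : ℕ} (μ : Nat.Partition n) : Multiset ℕ := (cells μ).val.map (hookLen μ)

/-- `H(μ)^⋄`: the multiset of hook lengths of the cells of `μ` with trivial leg. -/
def hooksDia {n : ℕ} (μ : Nat.Partition n) : Multiset ℕ :=
  (((cells μ).filter (fun c => legLen μ c = 0)).val).map (hookLen μ)

/-- `H(μ)^⋄⋄`: the multiset of hook lengths of the cells of `μ` with trivial arm. -/
def hooksDiaDia {n : ℕ} (μ : Nat.Partition n) : Multiset ℕ :=
  (((cells μ).filter (fun c => armLen μ c = 0)).val).map (hookLen μ)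

/-- The generalized binomial coefficient `C(w, k) = w(w-1)⋯(w-k+1)/k!`
for `w ∈ ℂ` and `k ∈ ℕ`. -/
noncomputable def cbinom (w : ℂ) (k : ℕ) : ℂ :=
  (∏ i ∈ Finset.range k, (w - (i : ℂ))) / (k.factorial : ℂ)

namespace HookAux
variable {n : ℕ} (μ : Nat.Partition n)


lemma part_le {p : ℕ} (hp : p ∈ μ.parts) : p ≤ n := by
  have := Multiset.single_le_sum (fun x _ => Nat.zero_le x) p hp
  rw [μ.parts_sum] at this; exact this

lemma colLen_anti {j j' : ℕ} (h : j ≤ j') : colLen μ j' ≤ colLen μ j :=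
  Multiset.card_le_card (Multiset.monotone_filter_right _ (fun p hp => by omega))

lemma colLen_le_card (j : ℕ) : colLen μ j ≤ Multiset.card μ.parts :=
  Multiset.card_le_card (Multiset.filter_le _ _)

lemma colLen_eq_zero {j : ℕ} (h : n ≤ j) : colLen μ j = 0 := by
  rw [colLen, Multiset.card_eq_zero, Multiset.filter_eq_nil]
  intro p hp
  have := part_le μ hp
  omega

lemma rowLen_le (i : ℕ) : rowLen μ i ≤ n :=
  (Finset.card_filter_le _ _).trans (by simp)

lemma rowLen_anti {i i' : ℕ} (h : i ≤ i') : rowLen μ i' ≤ rowLen μ i := by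
  apply Finset.card_le_card
  intro j hj
  simp only [Finset.mem_filter] at *
  exact ⟨hj.1, by omega⟩

lemma lt_rowLen_iff (i j : ℕ) : j < rowLen μ i ↔ i < colLen μ j := by
  set F := (Finset.range n).filter (fun j => i < colLen μ j) with hF
  have hR : rowLen μ i = F.card := rfl
  rw [hR]
  constructor
  · intro h
    by_contra hc
    push_neg at hc
    have hsub : F ⊆ Finset.range j := by
      intro a ha
      simp only [hF, Finset.mem_filter, Finset.mem_range] at ha
      simp only [Finset.mem_range]
      by_contra hja
      push_neg at hja
      exact absurd (lt_of_lt_of_le ha.2 (colLen_anti μ hja)) (by omega)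
    have := Finset.card_le_card hsub
    simp only [Finset.card_range] at this
    omega
  · intro h
    have hjn : j < n := by
      by_contra hjn
      push_neg at hjn
      rw [colLen_eq_zero μ hjn] at h
      omega
    have hsub : Finset.range (j+1) ⊆ F := by
      intro a ha
      simp only [Finset.mem_range] at ha
      simp only [hF, Finset.mem_filter, Finset.mem_range]
      exact ⟨by omega, lt_of_lt_of_le h (colLen_anti μ (by omega))⟩
    have := Finset.card_le_card hsub
    simp only [Finset.card_range] at this
    omega

lemma sum_filter_card (s : Multiset ℕ) (hs : ∀ p ∈ s, p ≤ n) :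
    ∑ j ∈ Finset.range n, (s.filter (fun p => j + 1 ≤ p)).card = s.sum := by
  induction s using Multiset.induction with
  | empty => simp
  | cons a t ih =>
      have ha : a ≤ n := hs a (Multiset.mem_cons_self a t)
      have ht : ∀ p ∈ t, p ≤ n := fun p hp => hs p (Multiset.mem_cons_of_mem hp)
      simp only [Multiset.filter_cons, Multiset.card_add, Multiset.sum_cons]
      rw [Finset.sum_add_distrib, ih ht]
      congr 1
      have heq : ∀ j ∈ Finset.range n, Multiset.card (if j + 1 ≤ a then ({a} : Multiset ℕ) else 0)
          = if j + 1 ≤ a then 1 else 0 := by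
        intro j _
        by_cases h : j + 1 ≤ a <;> simp [h]
      rw [Finset.sum_congr rfl heq, Finset.sum_ite, Finset.sum_const, Finset.sum_const]
      simp only [smul_eq_mul, mul_one, mul_zero, add_zero]
      have : (Finset.range n).filter (fun j => j + 1 ≤ a) = Finset.range a := by
        ext j
        simp only [Finset.mem_filter, Finset.mem_range]
        omega
      rw [this, Finset.card_range]

lemma colLen_sum : ∑ j ∈ Finset.range n, colLen μ j = n := by
  have := sum_filter_card μ.parts (fun p hp => part_le μ hp)
  rw [μ.parts_sum] at this
  exact this

def conj (μ : Nat.Partition n) : Nat.Partition n where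
  parts := ((Finset.range n).val.map (fun j => colLen μ j)).filter (fun m => 0 < m)
  parts_pos := fun h => Multiset.of_mem_filter h
  parts_sum := by
    have h1 : ∀ s : Multiset ℕ, (s.filter (fun m => 0 < m)).sum = s.sum := by
      intro s
      conv_rhs => rw [← Multiset.filter_add_not (fun m => 0 < m) s]
      rw [Multiset.sum_add]
      have : (s.filter (fun m => ¬ 0 < m)).sum = 0 :=
        Multiset.sum_eq_zero (fun x hx => by
          have := Multiset.of_mem_filter hx; omega)
      rw [this, add_zero]
    rw [h1]
    show ∑ j ∈ Finset.range n, colLen μ j = n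
    exact colLen_sum μ

lemma colLen_conj (i : ℕ) : colLen (conj μ) i = rowLen μ i := by
  show Multiset.card (Multiset.filter (fun p => i + 1 ≤ p)
      (((Finset.range n).val.map (fun j => colLen μ j)).filter (fun m => 0 < m))) = rowLen μ i
  rw [Multiset.filter_filter, Multiset.filter_map]
  rw [Multiset.card_map]
  rw [rowLen]
  have : Finset.filter (fun j => i < colLen μ j) (Finset.range n)
      = ⟨Multiset.filter ((fun m => i + 1 ≤ m ∧ 0 < m) ∘ fun j => colLen μ j) (Finset.range n).val,
        Multiset.Nodup.filter _ (Finset.range n).nodup⟩ := by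
    apply Finset.ext
    intro j
    simp only [Finset.mem_filter, Finset.mem_range, Finset.mem_mk, Multiset.mem_filter,
      Function.comp]
    constructor
    · rintro ⟨h1, h2⟩; exact ⟨by simpa using h1, by omega⟩
    · rintro ⟨h1, h2⟩; exact ⟨by simpa using h1, by omega⟩
  rw [this]
  rfl

lemma count_conj (i : ℕ) :
    (conj μ).parts.count (i + 1) = rowLen μ i - rowLen μ (i + 1) := by
  rw [Multiset.count, Multiset.countP_eq_card_filter]
  show Multiset.card (Multiset.filter (fun p => i + 1 = p)
      (((Finset.range n).val.map (fun j => colLen μ j)).filter (fun m => 0 < m))) = _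
  rw [Multiset.filter_filter, Multiset.filter_map, Multiset.card_map]
  have : (⟨Multiset.filter ((fun m => i + 1 = m ∧ 0 < m) ∘ fun j => colLen μ j)
        (Finset.range n).val,
        Multiset.Nodup.filter _ (Finset.range n).nodup⟩ : Finset ℕ)
      = Finset.Ico (rowLen μ (i+1)) (rowLen μ i) := by
    apply Finset.ext
    intro j
    simp only [Finset.mem_mk, Multiset.mem_filter, Finset.mem_range, Finset.mem_Ico,
      Function.comp]
    have h1 := lt_rowLen_iff μ i j
    have h2 := lt_rowLen_iff μ (i+1) j
    constructor
    · rintro ⟨hj, he, -⟩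
      have hjn : j ∈ Finset.range n := hj
      simp only [Finset.mem_range] at hjn
      omega
    · intro hj
      have hc : i < colLen μ j := h1.mp (by omega)
      have hc2 : ¬ (i + 1 < colLen μ j) := fun hh => by omega
      have hjn : j < n := by
        by_contra hjn
        rw [colLen_eq_zero μ (by omega)] at hc; omega
      exact ⟨Finset.mem_range.mpr hjn, by omega, by omega⟩
  have hcard := congrArg Finset.card this
  rw [Nat.card_Ico] at hcard
  exact hcard

lemma parts_card_le : Multiset.card μ.parts ≤ n := by
  have h : Multiset.card μ.parts • 1 ≤ μ.parts.sum :=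
    Multiset.card_nsmul_le_sum (fun x hx => μ.parts_pos hx)
  rw [μ.parts_sum] at h
  simpa using h

lemma colLen_le_n (j : ℕ) : colLen μ j ≤ n :=
  (colLen_le_card μ j).trans (parts_card_le μ)

lemma rowLen_conj (i : ℕ) : rowLen (conj μ) i = colLen μ i := by
  rw [rowLen]
  have : (Finset.range n).filter (fun j => i < colLen (conj μ) j)
      = Finset.range (colLen μ i) := by
    ext j
    simp only [Finset.mem_filter, Finset.mem_range, colLen_conj]
    have h := lt_rowLen_iff μ j i
    constructor
    · rintro ⟨-, h2⟩; exact h.mp h2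
    · intro hj
      refine ⟨lt_of_lt_of_le hj (colLen_le_n μ i), h.mpr hj⟩
  rw [this, Finset.card_range]

lemma countP_split (s : Multiset ℕ) (i : ℕ) :
    s.countP (fun p => i + 1 ≤ p) = s.count (i + 1) + s.countP (fun p => i + 2 ≤ p) := by
  induction s using Multiset.induction with
  | empty => simp
  | cons a t ih =>
      simp only [Multiset.countP_cons, Multiset.count_cons, ih]
      by_cases h1 : i + 1 ≤ a <;> by_cases h2 : i + 2 ≤ a <;> by_cases h3 : i + 1 = a <;>
        simp [h1, h2, h3] <;> omega

lemma count_parts (i : ℕ) : μ.parts.count (i + 1) = colLen μ i - colLen μ (i + 1) := by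
  have h := countP_split μ.parts i
  have h1 : colLen μ i = μ.parts.countP (fun p => i + 1 ≤ p) := by
    rw [colLen, Multiset.countP_eq_card_filter]
  have h2 : colLen μ (i + 1) = μ.parts.countP (fun p => i + 2 ≤ p) := by
    rw [colLen, Multiset.countP_eq_card_filter]
  omega

lemma conj_conj : conj (conj μ) = μ := by
  apply Nat.Partition.ext
  apply Multiset.ext.mpr
  intro m
  match m with
  | 0 =>
      rw [Multiset.count_eq_zero_of_notMem, Multiset.count_eq_zero_of_notMem]
      · intro h; exact absurd (μ.parts_pos h) (by omega)
      · intro h; exact absurd ((conj (conj μ)).parts_pos h) (by omega)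
  | i + 1 =>
      rw [count_conj, count_parts, rowLen_conj, rowLen_conj]


lemma prod_Icc_shift (k : ℕ) (g : ℕ → ℂ) :
    ∏ t ∈ Finset.Icc 1 k, g t = ∏ i ∈ Finset.range k, g (i + 1) := by
  apply Finset.prod_nbij' (fun t => t - 1) (fun i => i + 1)
  · intro t ht; simp only [Finset.mem_Icc] at ht; simp only [Finset.mem_range]; omega
  · intro i hi; simp only [Finset.mem_range] at hi; simp only [Finset.mem_Icc]; omega
  · intro t ht; simp only [Finset.mem_Icc] at ht; omega
  · intro i hi; omega
  · intro t ht; simp only [Finset.mem_Icc] at ht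
    congr 1; omega

lemma prod_range_factorial (k : ℕ) :
    ∏ i ∈ Finset.range k, ((i : ℂ) + 1) = (k.factorial : ℂ) := by
  induction k with
  | zero => simp
  | succ m ih =>
      rw [Finset.prod_range_succ, ih, Nat.factorial_succ]
      push_cast
      ring


lemma prod_reflect (k : ℕ) (z : ℂ) :
    ∏ i ∈ Finset.range k, ((k : ℂ) + z - (i : ℂ))
      = ∏ i ∈ Finset.range k, (z + 1 + (i : ℂ)) := by
  apply Finset.prod_nbij' (fun i => k - 1 - i) (fun i => k - 1 - i)
  · intro i hi; simp only [Finset.mem_range] at *; omega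
  · intro i hi; simp only [Finset.mem_range] at *; omega
  · intro i hi; simp only [Finset.mem_range] at hi; omega
  · intro i hi; simp only [Finset.mem_range] at hi; omega
  · intro i hi; simp only [Finset.mem_range] at hi
    have h1 : (k - 1 - i : ℕ) = k - (i + 1) := by omega
    rw [h1, Nat.cast_sub (by omega : i + 1 ≤ k)]
    push_cast
    ring

lemma cbinom_shift (k : ℕ) (z : ℂ) :
    cbinom ((k : ℂ) + z) k = ∏ t ∈ Finset.Icc 1 k, (((t : ℕ) : ℂ) + z) / ((t : ℕ) : ℂ) := by
  rw [prod_Icc_shift, cbinom, Finset.prod_div_distrib]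
  have hden : ∏ i ∈ Finset.range k, ((i + 1 : ℕ) : ℂ) = (k.factorial : ℂ) := by
    rw [← prod_range_factorial k]
    apply Finset.prod_congr rfl
    intro i _; push_cast; ring
  rw [hden, prod_reflect]
  congr 1
  apply Finset.prod_congr rfl
  intro i _; push_cast; ring

lemma cbinom_neg (k : ℕ) (z : ℂ) :
    cbinom ((k : ℂ) + z) k = (-1) ^ k * cbinom (-z - 1) k := by
  rw [cbinom, cbinom, ← mul_div_assoc]
  congr 1
  have h1 : ((-1 : ℂ)) ^ k = ∏ _i ∈ Finset.range k, (-1 : ℂ) := by simp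
  rw [h1, ← Finset.prod_mul_distrib, prod_reflect]
  apply Finset.prod_congr rfl
  intro i _; ring


lemma key (z : ℂ) :
    ((hooksDia μ).map (fun h => ((h : ℂ) + z) / (h : ℂ))).prod
      = ∏ j ∈ Finset.Icc 1 n,
          cbinom (((conj μ).parts.count j : ℂ) + z) ((conj μ).parts.count j) := by
  have hbind : (do let a ← hooksDia μ; pure ((a : ℕ) : ℂ))
      = Multiset.map (fun a : ℕ => (a : ℂ)) (hooksDia μ) := Multiset.bind_singleton _ _
  rw [hbind, Multiset.map_map]
  set f : ℕ → ℂ := fun h => ((h : ℂ) + z) / (h : ℂ) with hf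
  have step1 : ((hooksDia μ).map f).prod
      = ∏ c ∈ (cells μ).filter (fun c => legLen μ c = 0), f (hookLen μ c) := by
    rw [hooksDia, Multiset.map_map]
    rfl
  have hcomp : ((fun h : ℂ => (h + z) / h) ∘ fun a : ℕ => (a : ℂ)) = f := rfl
  rw [hcomp, step1]
  have step2 : (cells μ).filter (fun c => legLen μ c = 0)
      = (Finset.range n ×ˢ Finset.range n).filter
          (fun c => c.1 < colLen μ c.2 ∧ legLen μ c = 0) := by
    rw [cells, Finset.filter_filter]
  rw [step2, Finset.prod_filter, Finset.prod_product]
  have step3 : ∀ i ∈ Finset.range n,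
      (∏ j ∈ Finset.range n,
        if (i, j).1 < colLen μ (i, j).2 ∧ legLen μ (i, j) = 0 then f (hookLen μ (i, j)) else 1)
      = cbinom (((rowLen μ i - rowLen μ (i + 1) : ℕ) : ℂ) + z) (rowLen μ i - rowLen μ (i + 1)) := by
    intro i _
    rw [← Finset.prod_filter]
    have hstep : (Finset.range n).filter
          (fun j => (i, j).1 < colLen μ (i, j).2 ∧ legLen μ (i, j) = 0)
        = Finset.Ico (rowLen μ (i + 1)) (rowLen μ i) := by
      apply Finset.ext; intro j
      rw [Finset.mem_filter, Finset.mem_Ico]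
      simp only [Finset.mem_filter, Finset.mem_range, Finset.mem_Ico, legLen]
      have h1 := lt_rowLen_iff μ i j
      have h2 := lt_rowLen_iff μ (i + 1) j
      constructor
      · rintro ⟨hjn, hc, hleg⟩
        omega
      · intro hj
        have hc : i < colLen μ j := h1.mp (by omega)
        have hc2 : ¬ (i + 1 < colLen μ j) := fun hh => by omega
        have hjn : j < n := lt_of_lt_of_le (by omega : j < rowLen μ i) (rowLen_le μ i)
        exact ⟨hjn, hc, by omega⟩
    rw [hstep]
    have hhook : ∀ j ∈ Finset.Ico (rowLen μ (i + 1)) (rowLen μ i),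
        f (hookLen μ (i, j)) = f (rowLen μ i - j) := by
      intro j hj
      simp only [Finset.mem_Ico] at hj
      have h1 := lt_rowLen_iff μ i j
      have h2 := lt_rowLen_iff μ (i + 1) j
      have hc : i < colLen μ j := h1.mp (by omega)
      have hc2 : ¬ (i + 1 < colLen μ j) := fun hh => by omega
      congr 1
      simp only [hookLen, armLen, legLen]
      omega
    rw [Finset.prod_congr rfl hhook, cbinom_shift]
    apply Finset.prod_nbij' (fun j => rowLen μ i - j) (fun t => rowLen μ i - t)
    · intro j hj; simp only [Finset.mem_Ico] at hj; simp only [Finset.mem_Icc]; omega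
    · intro t ht; simp only [Finset.mem_Icc] at ht; simp only [Finset.mem_Ico]; omega
    · intro j hj; simp only [Finset.mem_Ico] at hj; omega
    · intro t ht; simp only [Finset.mem_Icc] at ht; omega
    · intro j hj; rfl
  rw [Finset.prod_congr rfl step3, prod_Icc_shift]
  apply Finset.prod_congr rfl
  intro i _
  rw [count_conj]

lemma sum_count (hn : 1 ≤ n) : ∑ j ∈ Finset.Icc 1 n, μ.parts.count j = Multiset.card μ.parts := by
  rw [← Multiset.toFinset_sum_count_eq μ.parts]
  apply (Finset.sum_subset _ _).symm
  · intro p hp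
    rw [Multiset.mem_toFinset] at hp
    simp only [Finset.mem_Icc]
    exact ⟨μ.parts_pos hp, part_le μ hp⟩
  · intro p _ hp
    rw [Multiset.mem_toFinset] at hp
    exact Multiset.count_eq_zero_of_notMem hp

lemma part2 (hn : 1 ≤ n) (z : ℂ) :
    ∏ j ∈ Finset.Icc 1 n, cbinom ((μ.parts.count j : ℂ) + z) (μ.parts.count j)
      = (-1) ^ (Multiset.card μ.parts) *
          ∏ j ∈ Finset.Icc 1 n, cbinom (-z - 1) (μ.parts.count j) := by
  have h : ∀ j ∈ Finset.Icc 1 n,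
      cbinom ((μ.parts.count j : ℂ) + z) (μ.parts.count j)
        = (-1) ^ (μ.parts.count j) * cbinom (-z - 1) (μ.parts.count j) :=
    fun j _ => cbinom_neg _ z
  rw [Finset.prod_congr rfl h, Finset.prod_mul_distrib, Finset.prod_pow_eq_pow_sum]
  rw [sum_count μ hn]


end HookAux

/-- For every positive integer `n` and every complex `z`,
`∑_{λ⊢n} ∏_{h ∈ H(λ)^⋄} (h+z)/h = ∑_{λ⊢n} ∏_{j=1}^n C(k_j(λ)+z, k_j(λ))
  = ∑_{λ⊢n} (-1)^{ℓ(λ)} ∏_{j=1}^n C(-z-1, k_j(λ))`,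
where `k_j(λ)` is the number of parts of `λ` equal to `j` and `ℓ(λ)` is the
number of parts of `λ`. -/
theorem hook_trivial_leg_eq_binomials (n : ℕ) (hn : 1 ≤ n) (z : ℂ) :
    (∑ μ : Nat.Partition n,
        ((hooksDia μ).map (fun h => ((h : ℂ) + z) / (h : ℂ))).prod
      = ∑ μ : Nat.Partition n,
          ∏ j ∈ Finset.Icc 1 n,
            cbinom ((μ.parts.count j : ℂ) + z) (μ.parts.count j)) ∧
    (∑ μ : Nat.Partition n,
        ∏ j ∈ Finset.Icc 1 n, cbinom ((μ.parts.count j : ℂ) + z) (μ.parts.count j)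
      = ∑ μ : Nat.Partition n,
          (-1) ^ (μ.parts.card) *
            ∏ j ∈ Finset.Icc 1 n, cbinom (-z - 1) (μ.parts.count j)) := by
  constructor
  · have h1 : ∀ μ : Nat.Partition n,
        ((hooksDia μ).map (fun h => ((h : ℂ) + z) / (h : ℂ))).prod
          = ∏ j ∈ Finset.Icc 1 n,
              cbinom (((HookAux.conj μ).parts.count j : ℂ) + z) ((HookAux.conj μ).parts.count j) :=
      fun μ => HookAux.key μ z
    trans (∑ μ : Nat.Partition n, ∏ j ∈ Finset.Icc 1 n,
        cbinom (((HookAux.conj μ).parts.count j : ℂ) + z) ((HookAux.conj μ).parts.count j))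
    · exact Finset.sum_congr rfl (fun μ _ => h1 μ)
    · exact Equiv.sum_comp (Function.Involutive.toPerm HookAux.conj (HookAux.conj_conj))
        (fun ν => ∏ j ∈ Finset.Icc 1 n, cbinom ((ν.parts.count j : ℂ) + z) (ν.parts.count j))
  · exact Finset.sum_congr rfl (fun μ _ => HookAux.part2 μ hn z)
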